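/- Let (X,d) be a metric space, let P and C be finite nonempty subsets of X, and let a* ∈ P satisfy d(a*,C) = max_{p∈P} d(p,C). Let ε > 0, r > 0, and let Z be a finite nonempty subset of X containing a point z₀ with d(z₀,a*) ≤ 2r. If r ≤ (ε/2)·max_{z∈Z} d(z,C), then (1+ε)·max_{z∈Z} d(z,C) ≥ max_{p∈P} d(p,C). -/
import Mathlib

/-- key inequality of Lemma 4 (termination of AFN gives a
`(1+ε)`-approximate furthest neighbor). -/
theorem stmt_4 {X : Type*} [MetricSpace X] (P C : Finset X)
    (hP : P.Nonempty) (hC : C.Nonempty)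
    (astar : X) (hastar : astar ∈ P)
    (hfar : ∀ p ∈ P, Metric.infDist p (C : Set X) ≤ Metric.infDist astar (C : Set X))
    (ε r : ℝ) (hε : 0 < ε) (hr : 0 < r)
    (Z : Finset X) (hZ : Z.Nonempty)
    (z₀ : X) (hz₀Z : z₀ ∈ Z) (hz₀ : dist z₀ astar ≤ 2 * r)
    (hterm : r ≤ ε / 2 * Z.sup' hZ (fun z => Metric.infDist z (C : Set X))) :
    (1 + ε) * Z.sup' hZ (fun z => Metric.infDist z (C : Set X)) ≥
      P.sup' hP (fun p => Metric.infDist p (C : Set X)) := by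
  set M := Z.sup' hZ (fun z => Metric.infDist z (C : Set X)) with hM
  have hPsup : P.sup' hP (fun p => Metric.infDist p (C : Set X)) ≤
      Metric.infDist astar (C : Set X) :=
    Finset.sup'_le _ _ hfar
  have h1 : Metric.infDist astar (C : Set X) ≤ Metric.infDist z₀ (C : Set X) + dist astar z₀ :=
    Metric.infDist_le_infDist_add_dist
  have h2 : Metric.infDist z₀ (C : Set X) ≤ M :=
    Finset.le_sup' (fun z => Metric.infDist z (C : Set X)) hz₀Z
  have h3 : dist astar z₀ ≤ ε * M := by
    rw [dist_comm]
    linarith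
  calc P.sup' hP (fun p => Metric.infDist p (C : Set X))
      ≤ Metric.infDist astar (C : Set X) := hPsup
    _ ≤ M + ε * M := by linarith
    _ = (1 + ε) * M := by ring
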